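/- If a model satisfies IA and M-neutrality with M = [n] (full neutrality), then it is the independence model: f(p)(s) = ∏ᵢ pᵢ(sᵢ) for all p and s. -/

import Mathlib

open MeasureTheory Finset Function

noncomputable section

/-- The uniform probability measure on `[0,1] ⊆ ℝ`. -/
def unif01 : Measure ℝ := volume.restrict (Set.Icc 0 1)

/-- `q` is a probability mass function on `[w] = {1,…,w}`. -/
def IsPMF (w : ℕ) (q : ℕ → ℝ) : Prop :=
  (∀ t, 0 ≤ q t) ∧ (∀ t, t ∉ Finset.Icc 1 w → q t = 0) ∧
    ∑ t ∈ Finset.Icc 1 w, q t = 1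

/-- Collapse of adjacent bins `j` and `j+1`: `q^j(t) = q(t)·1{t ≤ j} + q(t+1)·1{t ≥ j}`. -/
def collapsePM (j : ℕ) (q : ℕ → ℝ) : ℕ → ℝ :=
  fun t => (if t ≤ j then q t else 0) + (if j ≤ t then q (t + 1) else 0)

/-- CDF of a pmf on `{1,…,w}`. -/
def pmfCDF (q : ℕ → ℝ) (t : ℕ) : ℝ := ∑ s ∈ Finset.Icc 1 t, q s

/-- The product box `∏ᵢ {1,…,zᵢ}`. -/
def prodBox {n : ℕ} (z : Fin n → ℕ) : Finset (Fin n → ℕ) :=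
  Fintype.piFinset fun i => Finset.Icc 1 (z i)

/-- `μ` is a joint pmf on `∏ᵢ {1,…,zᵢ}`. -/
def IsJointPMF {n : ℕ} (z : Fin n → ℕ) (μ : (Fin n → ℕ) → ℝ) : Prop :=
  (∀ s, 0 ≤ μ s) ∧ (∀ s, s ∉ prodBox z → μ s = 0) ∧ ∑ s ∈ prodBox z, μ s = 1

/-- The `i`-th marginal of a joint pmf. -/
def jointMarginal {n : ℕ} (z : Fin n → ℕ) (μ : (Fin n → ℕ) → ℝ) (i : Fin n) (t : ℕ) : ℝ :=
  ∑ s ∈ (prodBox z).filter fun s => s i = t, μ s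

/-- Joint CDF of a joint pmf. -/
def jointCDF {n : ℕ} (μ : (Fin n → ℕ) → ℝ) (s : Fin n → ℕ) : ℝ :=
  ∑ t ∈ Fintype.piFinset fun i => Finset.Icc 1 (s i), μ t

/-- A (candidate) model: assigns to each `z` and tuple of marginals a joint pmf. -/
abbrev Model (n : ℕ) := (z : Fin n → ℕ) → (Fin n → ℕ → ℝ) → (Fin n → ℕ) → ℝ

/-- `f` is a model: it returns a joint pmf whose marginals are the inputs. -/
def IsModel {n : ℕ} (f : Model n) : Prop :=
  ∀ z p, (∀ i, IsPMF (z i) (p i)) →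
    IsJointPMF z (f z p) ∧ ∀ i t, jointMarginal z (f z p) i t = p i t

/-- Invariant Aggregation: merging adjacent bins `j, j+1` of marginal `i`
does not affect the joint distribution over unaffected values. -/
def SatisfiesIA {n : ℕ} (f : Model n) : Prop :=
  ∀ z p, (∀ i, IsPMF (z i) (p i)) → ∀ i : Fin n, ∀ j ∈ Finset.Icc 1 (z i - 1),
    ∀ s ∈ prodBox (Function.update z i (z i - 1)),
      f (Function.update z i (z i - 1)) (Function.update p i (collapsePM j (p i))) s =
        (if s i ≤ j then f z p s else 0) +
          (if j ≤ s i then f z p (Function.update s i (s i + 1)) else 0)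

/-- A copula measure: a probability measure on `[0,1]^ι` with standard uniform marginals. -/
def IsCopulaMeasure {ι : Type*} [Fintype ι] (μ : Measure (ι → ℝ)) : Prop :=
  IsProbabilityMeasure μ ∧ ∀ i : ι, μ.map (fun t => t i) = unif01

/-- `C` is a copula: the CDF of a probability measure with uniform marginals. -/
def IsCopula {ι : Type*} [Fintype ι] (C : (ι → ℝ) → ℝ) : Prop :=
  ∃ μ : Measure (ι → ℝ), IsCopulaMeasure μ ∧
    ∀ x : ι → ℝ, (∀ i, x i ∈ Set.Icc (0 : ℝ) 1) →
      (μ {t | ∀ i, t i ≤ x i}).toReal = C x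

/-- `f` is a copula model with copula `C`: `F_{f(p)}(s) = C(F_{p₁}(s₁),…,F_{pₙ}(sₙ))`. -/
def IsCopulaModelWith {n : ℕ} (f : Model n) (C : (Fin n → ℝ) → ℝ) : Prop :=
  IsCopula C ∧ ∀ z p, (∀ i, IsPMF (z i) (p i)) → ∀ s ∈ prodBox z,
    jointCDF (f z p) s = C fun i => pmfCDF (p i) (s i)

/-- The binary distribution `b_t` on `{1,2}` with `b_t(1) = t`, `b_t(2) = 1 - t`. -/
def binPMF (t : ℝ) : ℕ → ℝ := fun s => if s = 1 then t else if s = 2 then 1 - t else 0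

/-- `σ` is a permutation of `{1,…,w}` (fixing everything else). -/
def PermOn (w : ℕ) (σ : Equiv.Perm ℕ) : Prop := ∀ t ∉ Finset.Icc 1 w, σ t = t

/-- `M`-neutrality for `M = {i : (i : ℕ) < m}`: relabelling the bins of a marginal in `M`
just relabels the joint distribution accordingly. -/
def MNeutral {n : ℕ} (f : Model n) (m : ℕ) : Prop :=
  ∀ z p, (∀ i, IsPMF (z i) (p i)) → ∀ i : Fin n, (i : ℕ) < m →
    ∀ σ : Equiv.Perm ℕ, PermOn (z i) σ → ∀ s ∈ prodBox z,
      f z (Function.update p i fun t => p i (σ t)) s =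
        f z p (Function.update s i (σ (s i)))

/-- A coupling of two pmfs `q₁` on `[w₁]`, `q₂` on `[w₂]`. -/
def IsCoupling (w₁ w₂ : ℕ) (q₁ q₂ : ℕ → ℝ) (μ : ℕ × ℕ → ℝ) : Prop :=
  (∀ a, 0 ≤ μ a) ∧ (∀ a, a ∉ (Finset.Icc 1 w₁) ×ˢ (Finset.Icc 1 w₂) → μ a = 0) ∧
    (∀ s, ∑ t ∈ Finset.Icc 1 w₂, μ (s, t) = q₁ s) ∧
    (∀ t, ∑ s ∈ Finset.Icc 1 w₁, μ (s, t) = q₂ t)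

/-- Diagonal mass of a coupling. -/
def diagMass (w₁ w₂ : ℕ) (μ : ℕ × ℕ → ℝ) : ℝ :=
  ∑ s ∈ Finset.Icc 1 (min w₁ w₂), μ (s, s)

/-- A maximal coupling: a coupling maximizing the diagonal mass. -/
def IsMaxCoupling (w₁ w₂ : ℕ) (q₁ q₂ : ℕ → ℝ) (μ : ℕ × ℕ → ℝ) : Prop :=
  IsCoupling w₁ w₂ q₁ q₂ μ ∧
    ∀ ν, IsCoupling w₁ w₂ q₁ q₂ ν → diagMass w₁ w₂ ν ≤ diagMass w₁ w₂ μ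

/-! ### Auxiliary lemmas -/

section Aux

lemma IsPMF.one_le' {w : ℕ} {q : ℕ → ℝ} (h : IsPMF w q) : 1 ≤ w := by
  by_contra hw
  have hem : Finset.Icc 1 w = ∅ := by apply Finset.Icc_eq_empty; omega
  have h2 := h.2.2
  rw [hem] at h2
  simp at h2

lemma permOn_maps {w : ℕ} {σ : Equiv.Perm ℕ} (hσ : PermOn w σ) {t : ℕ}
    (ht : t ∈ Finset.Icc 1 w) : σ t ∈ Finset.Icc 1 w := by
  by_contra h
  have h1 := hσ _ h
  have h2 : σ t = t := σ.injective (by rw [h1])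
  rw [h2] at h; exact h ht

lemma PermOn.symm' {w : ℕ} {σ : Equiv.Perm ℕ} (hσ : PermOn w σ) : PermOn w σ.symm := by
  intro t ht
  have := hσ t ht
  conv_lhs => rw [← this]
  simp

lemma IsPMF.perm {w : ℕ} {q : ℕ → ℝ} {σ : Equiv.Perm ℕ} (h : IsPMF w q)
    (hσ : PermOn w σ) : IsPMF w (fun t => q (σ t)) := by
  refine ⟨fun t => h.1 _, fun t ht => ?_, ?_⟩
  · simp only []
    rw [hσ t ht]; exact h.2.1 t ht
  · rw [← h.2.2]
    exact Finset.sum_nbij' (fun t => σ t) (fun t => σ.symm t)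
      (fun t ht => permOn_maps hσ ht) (fun t ht => permOn_maps hσ.symm' ht)
      (by simp) (by simp) (fun t ht => rfl)

lemma IsPMF.collapse {w j : ℕ} {q : ℕ → ℝ} (h : IsPMF w q) (hj1 : 1 ≤ j)
    (hj2 : j ≤ w - 1) (hw : 2 ≤ w) : IsPMF (w - 1) (collapsePM j q) := by
  refine ⟨fun t => by
      have := h.1 t; have := h.1 (t+1)
      unfold collapsePM; split <;> split <;> simp <;> linarith,
    fun t ht => ?_, ?_⟩
  · simp only [Finset.mem_Icc, not_and_or, not_le] at ht
    unfold collapsePM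
    rcases ht with ht | ht
    · have : t = 0 := by omega
      subst this
      simp only [hj1, if_pos (Nat.zero_le j)]
      rw [h.2.1 0 (by simp), if_neg (by omega)]
      ring
    · rw [if_neg (by omega), if_pos (by omega), h.2.1 (t+1) (by simp; omega)]
      ring
  · unfold collapsePM
    rw [Finset.sum_add_distrib]
    have e1 : ∑ t ∈ Finset.Icc 1 (w-1), (if t ≤ j then q t else 0)
        = ∑ t ∈ Finset.Icc 1 j, q t := by
      rw [← Finset.sum_filter]
      congr 1
      ext t
      simp only [Finset.mem_filter, Finset.mem_Icc]
      omega
    have e2 : ∑ t ∈ Finset.Icc 1 (w-1), (if j ≤ t then q (t+1) else 0)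
        = ∑ t ∈ Finset.Icc (j+1) w, q t := by
      rw [← Finset.sum_filter]
      have hfl : (Finset.Icc 1 (w-1)).filter (fun t => j ≤ t) = Finset.Icc j (w-1) := by
        ext t
        simp only [Finset.mem_filter, Finset.mem_Icc]
        omega
      rw [hfl]
      refine Finset.sum_nbij' (fun t => t + 1) (fun t => t - 1)
        (fun t ht => ?_) (fun t ht => ?_) (fun t ht => ?_) (fun t ht => ?_)
        (fun t ht => rfl) <;>
        simp only [Finset.mem_Icc] at * <;> omega
    rw [e1, e2]
    rw [show Finset.Icc 1 j = Finset.Ioc 0 j by rw [← Finset.Icc_add_one_left_eq_Ioc]; rfl,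
        show Finset.Icc (j+1) w = Finset.Ioc j w by rw [← Finset.Icc_add_one_left_eq_Ioc],
        Finset.sum_Ioc_consecutive _ (by omega) (by omega)]
    rw [show Finset.Ioc 0 w = Finset.Icc 1 w by rw [← Finset.Icc_add_one_left_eq_Ioc]; rfl]
    exact h.2.2

lemma Icc12 : Finset.Icc 1 2 = ({1, 2} : Finset ℕ) := by decide

lemma binPMF_isPMF {t : ℝ} (h0 : 0 ≤ t) (h1 : t ≤ 1) : IsPMF 2 (binPMF t) := by
  refine ⟨fun s => ?_, fun s hs => ?_, ?_⟩
  · unfold binPMF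
    split_ifs <;> first | exact h0 | linarith | norm_num
  · simp only [Finset.mem_Icc] at hs
    unfold binPMF
    rw [if_neg (by omega), if_neg (by omega)]
  · rw [Icc12, Finset.sum_insert (by decide), Finset.sum_singleton]
    unfold binPMF; norm_num

lemma eq_binPMF {q : ℕ → ℝ} (h : IsPMF 2 q) : q = binPMF (q 1) := by
  funext t
  have hsum := h.2.2
  rw [Icc12, Finset.sum_insert (by decide), Finset.sum_singleton] at hsum
  unfold binPMF
  rcases Nat.lt_or_ge t 3 with ht | ht
  · interval_cases t
    · simpa using h.2.1 0 (by decide)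
    · simp
    · simp; linarith
  · rw [if_neg (by omega), if_neg (by omega)]
    exact h.2.1 t (by simp; omega)

lemma cauchy_linear (c : ℝ → ℝ)
    (hadd : ∀ a b, 0 ≤ a → 0 ≤ b → a + b ≤ 1 → c (a + b) = c a + c b)
    (hnn : ∀ t, 0 ≤ t → t ≤ 1 → 0 ≤ c t) :
    ∀ t, 0 ≤ t → t ≤ 1 → c t = t * c 1 := by
  have c0 : c 0 = 0 := by
    have := hadd 0 0 le_rfl le_rfl (by norm_num)
    simp at this; linarith
  have mono : ∀ a b, 0 ≤ a → a ≤ b → b ≤ 1 → c a ≤ c b := by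
    intro a b ha hab hb
    have heq : c b = c a + c (b - a) := by
      have := hadd a (b - a) ha (by linarith) (by linarith)
      rw [show a + (b - a) = b by ring] at this
      exact this
    rw [heq]
    linarith [hnn (b - a) (by linarith) (by linarith)]
  have hc1 : 0 ≤ c 1 := hnn 1 zero_le_one le_rfl
  have step : ∀ (m : ℕ) (k : ℕ), (k : ℝ) / m ≤ 1 → c (k / m) = k * c (1 / m) := by
    intro m k
    induction k with
    | zero => intro _; simp [c0]
    | succ k ih =>
      intro hk
      rcases Nat.eq_zero_or_pos m with hm | hm
      · subst hm; push_cast; rw [div_zero, div_zero, c0]; ring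
      have hm' : (0:ℝ) < m := by exact_mod_cast hm
      have hkk : (k : ℝ) / m ≤ 1 := by
        apply div_le_one_of_le₀ _ (le_of_lt hm')
        rw [div_le_one hm'] at hk
        push_cast at hk ⊢; linarith
      have := hadd ((k : ℝ) / m) (1 / m) (by positivity) (by positivity)
        (by rw [← add_div]; push_cast at hk ⊢; exact hk)
      rw [← add_div] at this
      push_cast at this ⊢
      rw [this, ih hkk]
      ring
  have c1n : ∀ m : ℕ, 1 ≤ m → c (1 / m) = c 1 / m := by
    intro m hm
    have hm' : (0:ℝ) < m := by exact_mod_cast hm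
    have := step m m (by rw [div_self (ne_of_gt hm')])
    rw [div_self (ne_of_gt hm')] at this
    field_simp
    linarith [this]
  intro t ht ht1
  have key : ∀ m : ℕ, 1 ≤ m → |c t - t * c 1| ≤ c 1 / m := by
    intro m hm
    have hm' : (0:ℝ) < m := by exact_mod_cast hm
    set k : ℕ := ⌊t * m⌋₊ with hk
    have hk1 : (k : ℝ) ≤ t * m := Nat.floor_le (by positivity)
    have hk2 : t * m < k + 1 := Nat.lt_floor_add_one _
    have hlow : (t - 1/m) * c 1 ≤ c t := by
      have h1 : (k : ℝ) / m ≤ t := by rw [div_le_iff₀ hm']; linarith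
      have h2 : c ((k:ℝ)/m) ≤ c t := mono _ _ (by positivity) h1 ht1
      have h3 : c ((k:ℝ)/m) = k * (c 1 / m) := by
        rw [step m k (by rw [div_le_one hm']; nlinarith), c1n m hm]
      have h4 : t - 1/m ≤ (k:ℝ)/m := by
        rw [le_div_iff₀ hm']
        have he : (t - 1/m) * m = t * m - 1 := by field_simp
        rw [he]; linarith
      calc (t - 1/m) * c 1 ≤ ((k:ℝ)/m) * c 1 := mul_le_mul_of_nonneg_right h4 hc1
        _ = k * (c 1 / m) := by ring
        _ ≤ c t := by rw [← h3]; exact h2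
    have hhigh : c t ≤ (t + 1/m) * c 1 := by
      rcases le_or_gt ((k:ℝ)+1) m with hkm | hkm
      · have h1 : t ≤ ((k:ℝ)+1) / m := by rw [le_div_iff₀ hm']; linarith
        have h2 : c t ≤ c (((k:ℝ)+1)/m) := mono _ _ ht h1 (by rw [div_le_one hm']; linarith)
        have h3 : c (((k:ℝ)+1)/m) = (k+1) * (c 1 / m) := by
          have := step m (k+1) (by rw [div_le_one hm']; push_cast; linarith)
          push_cast at this
          rw [this, c1n m hm]
        have h4 : ((k:ℝ)+1)/m ≤ t + 1/m := by
          rw [div_le_iff₀ hm']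
          have he : (t + 1/m) * m = t * m + 1 := by field_simp
          rw [he]; linarith
        calc c t ≤ ((k:ℝ)+1) * (c 1 / m) := h3 ▸ h2
          _ = (((k:ℝ)+1)/m) * c 1 := by ring
          _ ≤ (t + 1/m) * c 1 := mul_le_mul_of_nonneg_right h4 hc1
      · have hmk : (m:ℝ) ≤ k := by exact_mod_cast Nat.lt_succ_iff.mp (by exact_mod_cast hkm)
        have ht1' : 1 ≤ t := by nlinarith
        have h1 : 1 ≤ t + 1/m := by
          have : 0 < 1/(m:ℝ) := by positivity
          linarith
        calc c t ≤ c 1 := mono _ _ ht ht1 le_rfl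
          _ ≤ (t + 1/m) * c 1 := by nlinarith
    have e1 : (t - 1/m) * c 1 = t * c 1 - c 1 / m := by ring
    have e2 : (t + 1/m) * c 1 = t * c 1 + c 1 / m := by ring
    rw [abs_le]
    constructor <;> linarith
  by_contra hne
  have habs : 0 < |c t - t * c 1| := by
    rcases lt_trichotomy (c t - t * c 1) 0 with h | h | h
    · rw [abs_of_neg h]; linarith
    · exact absurd (by linarith) hne
    · rw [abs_of_pos h]; linarith
  obtain ⟨m, hm⟩ := exists_nat_gt (c 1 / |c t - t * c 1|)
  have hm1 : 1 ≤ m := by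
    by_contra h
    have : m = 0 := by omega
    subst this
    simp at hm
    nlinarith [div_nonneg hc1 (le_of_lt habs)]
  have hm' : (0:ℝ) < m := by exact_mod_cast hm1
  have hkey := key m hm1
  rw [div_lt_iff₀ habs] at hm
  rw [le_div_iff₀ hm'] at hkey
  nlinarith

end Aux
section Aux2

lemma mem_prodBox {n : ℕ} {z : Fin n → ℕ} {s : Fin n → ℕ} :
    s ∈ prodBox z ↔ ∀ i, 1 ≤ s i ∧ s i ≤ z i := by
  simp [prodBox, Fintype.mem_piFinset, Finset.mem_Icc]

lemma prodBox_all_one {n : ℕ} {z : Fin n → ℕ} (h1 : ∀ j, z j = 1) :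
    prodBox z = {fun _ => 1} := by
  ext t
  simp only [mem_prodBox, Finset.mem_singleton]
  constructor
  · intro h
    funext i
    have hh := h i
    rw [h1 i] at hh
    show t i = 1
    omega
  · intro h i
    subst h
    simp [h1 i]

lemma pmf_one_val {q : ℕ → ℝ} (h : IsPMF 1 q) : q 1 = 1 := by
  have := h.2.2
  rwa [Finset.Icc_self, Finset.sum_singleton] at this

lemma joint_all_one {n : ℕ} {z : Fin n → ℕ} {μ : (Fin n → ℕ) → ℝ}
    (h : IsJointPMF z μ) (h1 : ∀ j, z j = 1) {s : Fin n → ℕ}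
    (hs : s ∈ prodBox z) : μ s = 1 := by
  have hbox := prodBox_all_one h1
  have h2 := h.2.2
  rw [hbox, Finset.sum_singleton] at h2
  rw [hbox, Finset.mem_singleton] at hs
  rw [hs]; exact h2

lemma marg_zero {n : ℕ} {z : Fin n → ℕ} {μ : (Fin n → ℕ) → ℝ}
    (h : IsJointPMF z μ) {i : Fin n} {t : ℕ}
    (hm : jointMarginal z μ i t = 0) {s : Fin n → ℕ}
    (hs : s ∈ prodBox z) (hst : s i = t) : μ s = 0 :=
  (Finset.sum_eq_zero_iff_of_nonneg (fun x _ => h.1 x)).mp hm s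
    (Finset.mem_filter.mpr ⟨hs, hst⟩)

/-- The point mass at `1`. -/
def onePMF : ℕ → ℝ := fun t => if t = 1 then 1 else 0

lemma onePMF_isPMF : IsPMF 1 onePMF := by
  refine ⟨fun t => ?_, fun t ht => ?_, ?_⟩
  · unfold onePMF; split <;> norm_num
  · simp only [Finset.mem_Icc] at ht
    unfold onePMF
    rw [if_neg (by omega)]
  · rw [Finset.Icc_self, Finset.sum_singleton]
    simp [onePMF]

/-- The pmf `(a, b, 1-a-b)` on three bins. -/
def triPMF (a b : ℝ) : ℕ → ℝ :=
  fun t => if t = 1 then a else if t = 2 then b else if t = 3 then 1 - a - b else 0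

lemma triPMF_isPMF {a b : ℝ} (ha : 0 ≤ a) (hb : 0 ≤ b) (hab : a + b ≤ 1) :
    IsPMF 3 (triPMF a b) := by
  refine ⟨fun t => ?_, fun t ht => ?_, ?_⟩
  · unfold triPMF
    split_ifs <;> first | exact ha | exact hb | linarith | norm_num
  · simp only [Finset.mem_Icc] at ht
    unfold triPMF
    rw [if_neg (by omega), if_neg (by omega), if_neg (by omega)]
  · rw [show Finset.Icc 1 3 = ({1, 2, 3} : Finset ℕ) by decide]
    rw [Finset.sum_insert (by decide), Finset.sum_insert (by decide),
      Finset.sum_singleton]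
    unfold triPMF; norm_num

lemma triPMF_swap (a b : ℝ) :
    (fun t => triPMF a b ((Equiv.swap 1 2) t)) = triPMF b a := by
  funext t
  rcases Nat.lt_or_ge t 3 with ht | ht
  · interval_cases t
    · rw [Equiv.swap_apply_of_ne_of_ne (by decide) (by decide)]; simp [triPMF]
    · rw [Equiv.swap_apply_left]; simp [triPMF]
    · rw [Equiv.swap_apply_right]; simp [triPMF]
  · rw [Equiv.swap_apply_of_ne_of_ne (by omega) (by omega)]
    unfold triPMF
    rcases Nat.lt_or_ge t 4 with ht' | ht'
    · interval_cases t
      simp only [if_neg (by omega : ¬(3:ℕ) = 1), if_neg (by omega : ¬(3:ℕ) = 2), if_pos rfl]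
      ring
    · simp [show t ≠ 1 by omega, show t ≠ 2 by omega, show t ≠ 3 by omega]

lemma collapse2_tri (a b : ℝ) : collapsePM 2 (triPMF a b) = binPMF a := by
  funext t
  unfold collapsePM triPMF binPMF
  rcases Nat.lt_or_ge t 4 with ht | ht
  · interval_cases t <;> norm_num
  · simp [show ¬ t ≤ 2 by omega, show 2 ≤ t by omega, show t ≠ 1 by omega, show t ≠ 0 by omega,
      show t ≠ 2 by omega, show t + 1 ≠ 1 by omega, show t + 1 ≠ 2 by omega,
      show t + 1 ≠ 3 by omega]

lemma collapse1_tri (a b : ℝ) : collapsePM 1 (triPMF a b) = binPMF (a + b) := by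
  funext t
  unfold collapsePM triPMF binPMF
  rcases Nat.lt_or_ge t 4 with ht | ht
  · interval_cases t <;> norm_num <;> ring
  · simp [show ¬ t ≤ 1 by omega, show 1 ≤ t by omega, show t ≠ 1 by omega, show t ≠ 0 by omega,
      show t ≠ 2 by omega, show t + 1 ≠ 1 by omega, show t + 1 ≠ 2 by omega,
      show t + 1 ≠ 3 by omega]

lemma collapse1_bin1 : collapsePM 1 (binPMF 1) = onePMF := by
  funext t
  unfold collapsePM binPMF onePMF
  rcases Nat.lt_or_ge t 3 with ht | ht
  · interval_cases t <;> norm_num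
  · simp [show ¬ t ≤ 1 by omega, show 1 ≤ t by omega, show t ≠ 1 by omega,
      show t ≠ 2 by omega, show t + 1 ≠ 1 by omega, show t + 1 ≠ 2 by omega, show t ≠ 0 by omega]

lemma collapse_apply_lt {j t : ℕ} (q : ℕ → ℝ) (h : t < j) :
    collapsePM j q t = q t := by
  unfold collapsePM
  rw [if_pos (by omega), if_neg (by omega)]
  ring

end Aux2
section Main

variable {n : ℕ}

lemma update_pmf {z : Fin n → ℕ} {p : Fin n → ℕ → ℝ} (hp : ∀ i, IsPMF (z i) (p i))
    {i : Fin n} {w : ℕ} {q : ℕ → ℝ} (hq : IsPMF w q) :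
    ∀ k, IsPMF (Function.update z i w k) (Function.update p i q k) := by
  intro k
  by_cases hk : k = i
  · subst hk; simp only [Function.update_self]; exact hq
  · rw [Function.update_of_ne hk, Function.update_of_ne hk]; exact hp k

lemma update_pmf' {z : Fin n → ℕ} {p : Fin n → ℕ → ℝ} (hp : ∀ i, IsPMF (z i) (p i))
    {i : Fin n} {q : ℕ → ℝ} (hq : IsPMF (z i) q) :
    ∀ k, IsPMF (z k) (Function.update p i q k) := by
  intro k
  by_cases hk : k = i
  · subst hk; simp only [Function.update_self]; exact hq
  · rw [Function.update_of_ne hk]; exact hp k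

lemma sum_update_nat (g : Fin n → ℕ) (i : Fin n) (a : ℕ) :
    ∑ k, Function.update g i a k + g i = ∑ k, g k + a := by
  rw [Finset.sum_update_of_mem (Finset.mem_univ i),
    ← Finset.add_sum_erase _ g (Finset.mem_univ i),
    show Finset.univ \ {i} = Finset.univ.erase i from by rw [Finset.erase_eq]]
  ring

lemma prod_update_eval {p : Fin n → ℕ → ℝ} {i : Fin n} {q : ℕ → ℝ} {s s' : Fin n → ℕ}
    (hss : ∀ k, k ≠ i → s' k = s k) :
    ∏ k, Function.update p i q k (s' k)
      = q (s' i) * ∏ k ∈ Finset.univ.erase i, p k (s k) := by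
  rw [← Finset.mul_prod_erase Finset.univ _ (Finset.mem_univ i), Function.update_self]
  congr 1
  refine Finset.prod_congr rfl (fun k hk => ?_)
  have hki : k ≠ i := Finset.ne_of_mem_erase hk
  rw [Function.update_of_ne hki, hss k hki]

lemma indep_of_all_one {f : Model n} (hf : IsModel f) {z : Fin n → ℕ}
    {p : Fin n → ℕ → ℝ} (hp : ∀ i, IsPMF (z i) (p i)) (h1 : ∀ j, z j = 1)
    {s : Fin n → ℕ} (hs : s ∈ prodBox z) : f z p s = ∏ i, p i (s i) := by
  rw [joint_all_one (hf z p hp).1 h1 hs]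
  symm
  apply Finset.prod_eq_one
  intro k _
  have hsk : s k = 1 := by
    have := mem_prodBox.mp hs k
    have := h1 k
    omega
  rw [hsk]
  exact pmf_one_val (h1 k ▸ hp k)

lemma key_lemma {f : Model n} (hf : IsModel f) (hIA : SatisfiesIA f) (hN : MNeutral f n) :
    ∀ N (z : Fin n → ℕ), (∑ j, z j) ≤ N → ∀ (M : ℕ) (p : Fin n → ℕ → ℝ) (s : Fin n → ℕ),
      (∀ i, IsPMF (z i) (p i)) → s ∈ prodBox z → (∑ j, s j) ≤ M →
      f z p s = ∏ i, p i (s i) := by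
  intro N
  induction N with
  | zero =>
    intro z hz M p s hp hs _
    refine indep_of_all_one hf hp (fun j => ?_) hs
    have h1 := (hp j).one_le'
    have hle : z j ≤ ∑ k, z k :=
      Finset.single_le_sum (fun k _ => Nat.zero_le _) (Finset.mem_univ j)
    omega
  | succ N IHN =>
    intro z hz M
    induction M with
    | zero =>
      intro p s hp hs hsM
      refine indep_of_all_one hf hp (fun j => ?_) hs
      have h2 := (mem_prodBox.mp hs j).1
      have hle : s j ≤ ∑ k, s k :=
        Finset.single_le_sum (fun k _ => Nat.zero_le _) (Finset.mem_univ j)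
      omega
    | succ M IHM =>
      intro p s hp hs hsM
      by_cases h3 : ∃ i, 3 ≤ z i
      · -- Case A: some coordinate has at least 3 bins
        obtain ⟨i, hi⟩ := h3
        have hsi := mem_prodBox.mp hs i
        have hσ : PermOn (z i) (Equiv.swap (s i) 1) := by
          intro t ht
          simp only [Finset.mem_Icc, not_and_or, not_le] at ht
          exact Equiv.swap_apply_of_ne_of_ne (by omega) (by omega)
        have hq : IsPMF (z i) (fun t => p i ((Equiv.swap (s i) 1) t)) := (hp i).perm hσ
        have hs' : Function.update s i 1 ∈ prodBox z := by
          rw [mem_prodBox]; intro k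
          by_cases hk : k = i
          · subst hk; rw [Function.update_self]
            exact ⟨le_rfl, le_trans (by omega) hi⟩
          · rw [Function.update_of_ne hk]; exact mem_prodBox.mp hs k
        have hneu := hN z p hp i i.isLt (Equiv.swap (s i) 1) hσ
          (Function.update s i 1) hs'
        have hupd : Function.update (Function.update s i 1) i
            ((Equiv.swap (s i) 1) (Function.update s i 1 i)) = s := by
          rw [Function.update_self, Equiv.swap_apply_right, Function.update_idem,
            Function.update_eq_self]
        rw [hupd] at hneu
        have hp2 := update_pmf' hp hq
        have hjmem : z i - 1 ∈ Finset.Icc 1 (z i - 1) := by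
          rw [Finset.mem_Icc]; omega
        have hs'2 : Function.update s i 1 ∈ prodBox (Function.update z i (z i - 1)) := by
          rw [mem_prodBox]; intro k
          by_cases hk : k = i
          · subst hk; rw [Function.update_self, Function.update_self]
            omega
          · rw [Function.update_of_ne hk, Function.update_of_ne hk]
            exact mem_prodBox.mp hs k
        have hia := hIA z _ hp2 i (z i - 1) hjmem (Function.update s i 1) hs'2
        simp only [Function.update_self, Function.update_idem] at hia
        rw [if_pos (by omega), if_neg (by omega), add_zero] at hia
        have hz' : ∑ k, Function.update z i (z i - 1) k ≤ N := by
          have := sum_update_nat z i (z i - 1)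
          omega
        have hp3 := update_pmf (i := i) hp (hq.collapse (by omega) le_rfl (by omega))
        have hmain := IHN _ hz' (∑ k, Function.update s i 1 k) _ _ hp3 hs'2 le_rfl
        rw [hia, hneu] at hmain
        rw [hmain,
          prod_update_eval (fun k hk => Function.update_of_ne hk 1 s),
          Function.update_self, collapse_apply_lt _ (by omega)]
        rw [Equiv.swap_apply_right,
          Finset.mul_prod_erase Finset.univ (fun k => p k (s k)) (Finset.mem_univ i)]
      push_neg at h3
      by_cases h2 : ∃ i, s i = 2
      · -- Case B: some coordinate of s equals 2; flip it to 1
        obtain ⟨i, hsi⟩ := h2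
        have hsbd := mem_prodBox.mp hs i
        have hzi : z i = 2 := by have := h3 i; omega
        have hσ : PermOn (z i) (Equiv.swap 1 2) := by
          intro t ht
          rw [hzi] at ht
          simp only [Finset.mem_Icc, not_and_or, not_le] at ht
          exact Equiv.swap_apply_of_ne_of_ne (by omega) (by omega)
        have hq : IsPMF (z i) (fun t => p i ((Equiv.swap 1 2) t)) := (hp i).perm hσ
        have hs' : Function.update s i 1 ∈ prodBox z := by
          rw [mem_prodBox]; intro k
          by_cases hk : k = i
          · subst hk; rw [Function.update_self]; omega
          · rw [Function.update_of_ne hk]; exact mem_prodBox.mp hs k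
        have hneu := hN z p hp i i.isLt (Equiv.swap 1 2) hσ (Function.update s i 1) hs'
        have hupd : Function.update (Function.update s i 1) i
            ((Equiv.swap 1 2) (Function.update s i 1 i)) = s := by
          rw [Function.update_self, Equiv.swap_apply_left, Function.update_idem,
            ← hsi, Function.update_eq_self]
        rw [hupd] at hneu
        have hsum : ∑ k, Function.update s i 1 k ≤ M := by
          have := sum_update_nat s i 1
          omega
        have hmain := IHM _ _ (update_pmf' hp hq) hs' hsum
        rw [← hneu, hmain,
          prod_update_eval (fun k hk => Function.update_of_ne hk 1 s),
          Function.update_self]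
        rw [Equiv.swap_apply_left, ← hsi,
          Finset.mul_prod_erase Finset.univ (fun k => p k (s k)) (Finset.mem_univ i)]
      push_neg at h2
      have hs1 : ∀ k, s k = 1 := by
        intro k
        have h4 := mem_prodBox.mp hs k
        have := h3 k
        have := h2 k
        omega
      by_cases hone : ∃ i, z i = 2
      · -- Case C: binary coordinate, all s = 1: Cauchy argument
        obtain ⟨i, hzi⟩ := hone
        have hp2i : IsPMF 2 (p i) := hzi ▸ hp i
        have hpbin : ∀ t : ℝ, 0 ≤ t → t ≤ 1 →
            ∀ k, IsPMF (z k) (Function.update p i (binPMF t) k) :=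
          fun t h0 h1 => update_pmf' hp (hzi ▸ binPMF_isPMF h0 h1)
        have hsi1 : s i = 1 := hs1 i
        have hadd : ∀ a b : ℝ, 0 ≤ a → 0 ≤ b → a + b ≤ 1 →
            f z (Function.update p i (binPMF (a + b))) s
              = f z (Function.update p i (binPMF a)) s
                + f z (Function.update p i (binPMF b)) s := by
          intro a b ha hb hab
          have hq3 : IsPMF 3 (triPMF a b) := triPMF_isPMF ha hb hab
          have hq3' : IsPMF 3 (triPMF b a) := triPMF_isPMF hb ha (by linarith)
          have hp3 := update_pmf (i := i) hp hq3
          have hp3' := update_pmf (i := i) hp hq3'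
          have hzup : Function.update (Function.update z i 3) i
              (Function.update z i 3 i - 1) = z := by
            rw [Function.update_self, Function.update_idem]
            show Function.update z i 2 = z
            rw [← hzi, Function.update_eq_self]
          have hsbox3 : s ∈ prodBox (Function.update z i 3) := by
            rw [mem_prodBox]; intro k
            by_cases hk : k = i
            · subst hk; rw [Function.update_self, hs1 k]; omega
            · rw [Function.update_of_ne hk, hs1 k]
              exact ⟨le_rfl, (hp k).one_le'⟩
          have hsboxz : s ∈ prodBox (Function.update (Function.update z i 3) i
              (Function.update z i 3 i - 1)) := by rw [hzup]; exact hs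
          have hjm2 : 2 ∈ Finset.Icc 1 (Function.update z i 3 i - 1) := by
            rw [Function.update_self, Finset.mem_Icc]; omega
          have hjm1 : 1 ∈ Finset.Icc 1 (Function.update z i 3 i - 1) := by
            rw [Function.update_self, Finset.mem_Icc]; omega
          have hia1 := hIA (Function.update z i 3) (Function.update p i (triPMF a b))
            hp3 i 2 hjm2 s hsboxz
          rw [hzup] at hia1
          simp only [Function.update_self, Function.update_idem] at hia1
          rw [collapse2_tri, hsi1, if_pos (by omega), if_neg (by omega), add_zero] at hia1
          have hia2 := hIA (Function.update z i 3) (Function.update p i (triPMF a b))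
            hp3 i 1 hjm1 s hsboxz
          rw [hzup] at hia2
          simp only [Function.update_self, Function.update_idem] at hia2
          rw [collapse1_tri, hsi1, if_pos (by omega), if_pos (by omega)] at hia2
          simp only [Nat.reduceAdd] at hia2
          have hσ3 : PermOn (Function.update z i 3 i) (Equiv.swap 1 2) := by
            rw [Function.update_self]
            intro t ht
            simp only [Finset.mem_Icc, not_and_or, not_le] at ht
            exact Equiv.swap_apply_of_ne_of_ne (by omega) (by omega)
          have hneu := hN (Function.update z i 3) (Function.update p i (triPMF a b))
            hp3 i i.isLt (Equiv.swap 1 2) hσ3 s hsbox3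
          simp only [Function.update_self, Function.update_idem] at hneu
          rw [triPMF_swap, hsi1, Equiv.swap_apply_left] at hneu
          have hia3 := hIA (Function.update z i 3) (Function.update p i (triPMF b a))
            hp3' i 2 hjm2 s hsboxz
          rw [hzup] at hia3
          simp only [Function.update_self, Function.update_idem] at hia3
          rw [collapse2_tri, hsi1, if_pos (by omega), if_neg (by omega), add_zero] at hia3
          rw [hia2, hia1, hia3, hneu]
        have hlin := cauchy_linear
          (fun t => f z (Function.update p i (binPMF t)) s) hadd
          (fun t h0 h1 => ((hf z _ (hpbin t h0 h1)).1).1 s)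
        have hval1 : (0:ℝ) ≤ p i 1 := (hp i).1 1
        have hsum2 := hp2i.2.2
        rw [Icc12, Finset.sum_insert (by decide), Finset.sum_singleton] at hsum2
        have hval2 : p i 1 ≤ 1 := by have := (hp i).1 2; linarith
        have hc1 : f z (Function.update p i (binPMF 1)) s
            = ∏ k ∈ Finset.univ.erase i, p k (s k) := by
          have hP1 := hpbin 1 zero_le_one le_rfl
          have hjm : 1 ∈ Finset.Icc 1 (z i - 1) := by rw [Finset.mem_Icc]; omega
          have hsboxz1 : s ∈ prodBox (Function.update z i (z i - 1)) := by
            rw [mem_prodBox]; intro k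
            by_cases hk : k = i
            · subst hk; rw [Function.update_self, hs1 k]; omega
            · rw [Function.update_of_ne hk, hs1 k]
              exact ⟨le_rfl, (hp k).one_le'⟩
          have hia4 := hIA z (Function.update p i (binPMF 1)) hP1 i 1 hjm s hsboxz1
          simp only [Function.update_self, Function.update_idem] at hia4
          rw [collapse1_bin1, hsi1, if_pos le_rfl, if_pos le_rfl] at hia4
          simp only [Nat.reduceAdd] at hia4
          have hzero : f z (Function.update p i (binPMF 1))
              (Function.update s i 2) = 0 := by
            refine marg_zero (hf z _ hP1).1 ?_ ?_ (Function.update_self ..)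
            · rw [(hf z _ hP1).2 i 2, Function.update_self]
              simp [binPMF]
            · rw [mem_prodBox]; intro k
              by_cases hk : k = i
              · subst hk; rw [Function.update_self]; omega
              · rw [Function.update_of_ne hk, hs1 k]
                exact ⟨le_rfl, (hp k).one_le'⟩
          rw [hzero, add_zero] at hia4
          have hz1' : ∑ k, Function.update z i (z i - 1) k ≤ N := by
            have := sum_update_nat z i (z i - 1); omega
          have honep : IsPMF (z i - 1) onePMF := by
            rw [show z i - 1 = 1 from by omega]; exact onePMF_isPMF
          have hmain := IHN _ hz1' (∑ k, s k) _ s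
            (update_pmf (i := i) hp honep) hsboxz1 le_rfl
          rw [hia4] at hmain
          rw [hmain, prod_update_eval (fun k hk => rfl), hsi1]
          simp [onePMF]
        have hfinal := hlin (p i 1) hval1 hval2
        have hself : Function.update p i (binPMF (p i 1)) = p := by
          rw [← eq_binPMF hp2i, Function.update_eq_self]
        rw [hself] at hfinal
        rw [hfinal, hc1, show p i 1 = p i (s i) from by rw [hsi1]]
        exact Finset.mul_prod_erase Finset.univ (fun k => p k (s k)) (Finset.mem_univ i)
      · push_neg at hone
        refine indep_of_all_one hf hp (fun j => ?_) hs
        have := (hp j).one_le'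
        have := h3 j
        have := hone j
        omega

end Main

/-- a model satisfying IA and full neutrality (`M = [n]`) is the
independence model. -/
theorem IA_neutral_is_independence (n : ℕ) (f : Model n) (hf : IsModel f)
    (hIA : SatisfiesIA f) (hN : MNeutral f n) :
    ∀ z p, (∀ i, IsPMF (z i) (p i)) → ∀ s ∈ prodBox z,
      f z p s = ∏ i, p i (s i) := by
  intro z p hp s hs
  exact key_lemma hf hIA hN (∑ j, z j) z le_rfl (∑ j, s j) p s hp hs le_rfl
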